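/- Let n ≥ 1, 1 < p < ∞, 1 ≤ q < ∞, 0 ≤ m' < 1/2, m > 1, and C₀ > 0. Let (u_{j,j_s})_{j,j_s∈ℤ} and (F_{j',j_t})_{j',j_t∈ℤ} be families of measurable functions ℝⁿ → [0,∞] such that for all j_t ∈ ℤ, all j' ≤ j_t, and every x ∈ ℝⁿ, F_{j',j_t}(x) ≤ C₀ · Σ_{j≥j'−2} Σ_{j_t≤j_s≤j} 2^{j'−j} · 2^{2(j−j_s)(1−m)} · M u_{j,j_s}(x). Then there exists a constant C > 0, depending only on n, p, q, m', m, C₀, such that sup_{j_t∈ℤ} Σ_{j'≤j_t} ( 2^{2(j'−j_t)m'} · 2^{j'(n/p−1)} · ‖F_{j',j_t}‖_{L^{p,∞}} )^q ≤ C · sup_{j_s∈ℤ} Σ_{j≥j_s} ( 2^{2(j−j_s)m} · 2^{j(n/p−1)} · ‖u_{j,j_s}‖_{L^{p,∞}} )^q. -/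

import Mathlib

open MeasureTheory ENNReal

/-- The Hardy–Littlewood maximal function of `g : ℝⁿ → [0,∞]`. -/
noncomputable def maxFn (n : ℕ) (g : EuclideanSpace ℝ (Fin n) → ℝ≥0∞)
    (x : EuclideanSpace ℝ (Fin n)) : ℝ≥0∞ :=
  ⨆ (r : ℝ) (_ : 0 < r), (∫⁻ y in Metric.ball x r, g y) / volume (Metric.ball x r)

/-- The weak-`L^p` quasinorm `sup_{λ>0} λ |{x : h x > λ}|^{1/p}` of `h : ℝⁿ → [0,∞]`. -/
noncomputable def wLp (n : ℕ) (p : ℝ) (h : EuclideanSpace ℝ (Fin n) → ℝ≥0∞) : ℝ≥0∞ :=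
  ⨆ (l : NNReal) (_ : 0 < l), (l : ℝ≥0∞) * (volume {x | (l : ℝ≥0∞) < h x}) ^ (1 / p)


open Metric Set Module

variable {n : ℕ} {p : ℝ}

lemma vol_lt_of_wLp (hp : 0 < p) (G : EuclideanSpace ℝ (Fin n) → ℝ≥0∞) {t : ℝ≥0∞}
    (ht0 : t ≠ 0) (htt : t ≠ ∞) :
    volume {x | t < G x} ≤ (wLp n p G / t) ^ p := by
  lift t to NNReal using htt
  have h1 : (t : ℝ≥0∞) * (volume {x | (t:ℝ≥0∞) < G x}) ^ (1/p) ≤ wLp n p G := by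
    refine le_iSup_of_le t (le_iSup_of_le ?_ le_rfl)
    exact pos_iff_ne_zero.2 (by exact_mod_cast ht0)
  have h2 : (volume {x | (t:ℝ≥0∞) < G x}) ^ (1/p) ≤ wLp n p G / t := by
    rw [ENNReal.le_div_iff_mul_le (Or.inl ht0) (Or.inl (by simp))]
    rwa [mul_comm] at h1
  calc volume {x | (t:ℝ≥0∞) < G x}
      = ((volume {x | (t:ℝ≥0∞) < G x}) ^ (1/p)) ^ p := by
        rw [← ENNReal.rpow_mul, one_div_mul_cancel hp.ne', ENNReal.rpow_one]
    _ ≤ (wLp n p G / t) ^ p := ENNReal.rpow_le_rpow h2 hp.le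

lemma wLp_mono (hp : 0 < p) {g h : EuclideanSpace ℝ (Fin n) → ℝ≥0∞} (hgh : ∀ x, g x ≤ h x) :
    wLp n p g ≤ wLp n p h := by
  refine iSup_mono fun l => iSup_mono fun _ => ?_
  refine mul_le_mul' le_rfl (ENNReal.rpow_le_rpow (measure_mono fun x hx => lt_of_lt_of_le hx (hgh x)) (by positivity))

lemma maxFn_mono {g h : EuclideanSpace ℝ (Fin n) → ℝ≥0∞} (hgh : ∀ x, g x ≤ h x)
    (x : EuclideanSpace ℝ (Fin n)) : maxFn n g x ≤ maxFn n h x := by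
  refine iSup_mono fun r => iSup_mono fun _ => ?_
  exact ENNReal.div_le_div (lintegral_mono fun y => hgh y) le_rfl

lemma maxFn_add_le {g : EuclideanSpace ℝ (Fin n) → ℝ≥0∞} (hg : Measurable g)
    (h : EuclideanSpace ℝ (Fin n) → ℝ≥0∞) (x : EuclideanSpace ℝ (Fin n)) :
    maxFn n (fun y => g y + h y) x ≤ maxFn n g x + maxFn n h x := by
  refine iSup₂_le fun r hr => ?_
  rw [lintegral_add_left hg, ENNReal.add_div]
  exact add_le_add (le_iSup₂_of_le r hr le_rfl) (le_iSup₂_of_le r hr le_rfl)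

lemma maxFn_const_le (c : ℝ≥0∞) (x : EuclideanSpace ℝ (Fin n)) :
    maxFn n (fun _ => c) x ≤ c := by
  refine iSup₂_le fun r hr => ?_
  rw [setLIntegral_const]
  exact ENNReal.div_le_of_le_mul le_rfl

lemma weak_one_one (hn : 1 ≤ n) (g : EuclideanSpace ℝ (Fin n) → ℝ≥0∞) {l : ℝ≥0∞}
    (hl0 : l ≠ 0) (hlt : l ≠ ∞) :
    volume {x | l < maxFn n g x} ≤ (4:ℝ≥0∞)^n / l * ∫⁻ x, g x := by
  haveI : Nonempty (Fin n) := ⟨⟨0, hn⟩⟩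
  haveI : Nontrivial (EuclideanSpace ℝ (Fin n)) := by
    refine ⟨0, EuclideanSpace.single ⟨0, hn⟩ 1, fun h => ?_⟩
    have := congrArg (fun v : EuclideanSpace ℝ (Fin n) => v ⟨0, hn⟩) h.symm
    simp [EuclideanSpace.single_apply] at this
  by_cases hI : ∫⁻ x, g x = ∞
  · rw [hI, ENNReal.mul_top]
    · exact le_top
    · exact ENNReal.div_ne_zero.2 ⟨by positivity, hlt⟩
  set E := {x : EuclideanSpace ℝ (Fin n) | l < maxFn n g x} with hE
  have key : ∀ x ∈ E, ∃ r : ℝ, 0 < r ∧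
      l * volume (ball x r) < ∫⁻ y in ball x r, g y := by
    intro x hx
    rw [hE, mem_setOf_eq, maxFn, lt_iSup_iff] at hx
    obtain ⟨r, hr⟩ := hx
    rw [lt_iSup_iff] at hr
    obtain ⟨hr0, hr⟩ := hr
    exact ⟨r, hr0, (ENNReal.lt_div_iff_mul_lt
      (Or.inl (measure_ball_pos volume x hr0).ne')
      (Or.inl measure_ball_lt_top.ne)).1 hr⟩
  choose! r hr0 hrint using key
  set B1 := volume (ball (0:EuclideanSpace ℝ (Fin n)) 1) with hB1
  have hB1pos : 0 < B1 := measure_ball_pos volume _ one_pos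
  have hB1top : B1 ≠ ∞ := measure_ball_lt_top.ne
  have hfr : finrank ℝ (EuclideanSpace ℝ (Fin n)) = n := finrank_euclideanSpace_fin
  have hball : ∀ (a : EuclideanSpace ℝ (Fin n)) (s : ℝ), 0 ≤ s →
      volume (ball a s) = ENNReal.ofReal (s^n) * B1 := by
    intro a s hs
    have := Measure.addHaar_ball volume a hs
    rwa [hfr] at this
  have hcball : ∀ (a : EuclideanSpace ℝ (Fin n)) (s : ℝ), 0 ≤ s →
      volume (closedBall a s) = ENNReal.ofReal (s^n) * B1 := by
    intro a s hs
    have := Measure.addHaar_closedBall volume a hs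
    rwa [hfr] at this
  set V := (∫⁻ x, g x) / (l * B1) with hV
  have hVtop : V ≠ ∞ :=
    (ENNReal.div_lt_top hI (mul_ne_zero hl0 hB1pos.ne')).ne
  set R : ℝ := max 1 V.toReal with hR
  have hrR : ∀ a ∈ E, r a ≤ R := by
    intro a ha
    have h1 : l * volume (ball a (r a)) ≤ ∫⁻ x, g x :=
      ((hrint a ha).le.trans (setLIntegral_le_lintegral _ _))
    have h2 := hball a (r a) (hr0 a ha).le
    have h3 : ENNReal.ofReal ((r a)^n) ≤ V := by
      rw [hV, ENNReal.le_div_iff_mul_le (Or.inl (mul_ne_zero hl0 hB1pos.ne'))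
        (Or.inl (ENNReal.mul_ne_top hlt hB1top))]
      calc ENNReal.ofReal ((r a)^n) * (l * B1)
          = l * (ENNReal.ofReal ((r a)^n) * B1) := by ring
        _ = l * volume (ball a (r a)) := by rw [h2]
        _ ≤ _ := h1
    have h4 : (r a)^n ≤ V.toReal := by
      rwa [ENNReal.ofReal_le_iff_le_toReal hVtop] at h3
    rcases le_or_gt (r a) 1 with h | h
    · exact h.trans (le_max_left _ _)
    · refine le_trans ?_ (le_max_right 1 V.toReal)
      calc r a ≤ (r a)^n := le_self_pow₀ h.le (by omega)
        _ ≤ V.toReal := h4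
  obtain ⟨u, huE, hdisj, hcov⟩ :=
    Vitali.exists_disjoint_subfamily_covering_enlargement_closedBall E id r R hrR 4 (by norm_num)
  simp only [id] at hdisj hcov
  have hdisj' : Pairwise (Function.onFun Disjoint fun b : ↥u => closedBall b.1 (r b.1)) := by
    intro b c hbc
    exact hdisj b.2 c.2 (Subtype.coe_injective.ne hbc)
  haveI hcnt : Countable ↥u := by
    have hc := MeasureTheory.Measure.countable_meas_pos_of_disjoint_iUnion
      (μ := volume) (fun b : ↥u => measurableSet_closedBall) hdisj'
    have : {b : ↥u | 0 < volume (closedBall b.1 (r b.1))} = univ := by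
      refine eq_univ_of_forall fun b => ?_
      exact lt_of_lt_of_le (measure_ball_pos volume _ (hr0 b.1 (huE b.2)))
        (measure_mono ball_subset_closedBall)
    rw [this] at hc
    exact Set.countable_univ_iff.1 hc
  have hEsub : E ⊆ ⋃ b ∈ u, closedBall b (4 * r b) := by
    intro a ha
    obtain ⟨b, hb, hsub⟩ := hcov a ha
    exact mem_biUnion hb (hsub (mem_closedBall_self (hr0 a ha).le))
  have hdisjball : Pairwise (Function.onFun Disjoint fun b : ↥u => ball b.1 (r b.1)) := by
    intro b c hbc
    exact (hdisj' hbc).mono ball_subset_closedBall ball_subset_closedBall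
  show volume E ≤ _
  calc volume E ≤ volume (⋃ b ∈ u, closedBall b (4 * r b)) := measure_mono hEsub
    _ ≤ ∑' b : ↥u, volume (closedBall b.1 (4 * r b.1)) := by
        rw [biUnion_eq_iUnion]
        exact measure_iUnion_le _
    _ = ∑' b : ↥u, (4:ℝ≥0∞)^n * volume (ball b.1 (r b.1)) := by
        refine tsum_congr fun b => ?_
        have h0 : (0:ℝ) ≤ r b.1 := (hr0 b.1 (huE b.2)).le
        rw [hcball _ _ (by positivity : (0:ℝ) ≤ 4 * r b.1), hball _ _ h0, mul_pow,
          ENNReal.ofReal_mul (by positivity), ← mul_assoc]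
        congr 2
        rw [ENNReal.ofReal_pow (by norm_num : (0:ℝ) ≤ 4)]
        norm_num
    _ ≤ (4:ℝ≥0∞)^n * ∑' b : ↥u, (∫⁻ y in ball b.1 (r b.1), g y) / l := by
        rw [ENNReal.tsum_mul_left]
        refine mul_le_mul' le_rfl (ENNReal.tsum_le_tsum fun b => ?_)
        rw [ENNReal.le_div_iff_mul_le (Or.inl hl0) (Or.inl hlt), mul_comm]
        exact (hrint b.1 (huE b.2)).le
    _ = (4:ℝ≥0∞)^n * (∑' b : ↥u, ∫⁻ y in ball b.1 (r b.1), g y) / l := by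
        simp only [div_eq_mul_inv, ENNReal.tsum_mul_right, mul_assoc]
    _ ≤ (4:ℝ≥0∞)^n * (∫⁻ x, g x) / l := by
        refine ENNReal.div_le_div (mul_le_mul' le_rfl ?_) le_rfl
        rw [← lintegral_iUnion (fun b : ↥u => measurableSet_ball) hdisjball]
        exact setLIntegral_le_lintegral _ _
    _ = (4:ℝ≥0∞)^n / l * ∫⁻ x, g x := by
        rw [div_eq_mul_inv, div_eq_mul_inv, mul_assoc, mul_assoc, mul_comm (∫⁻ x, g x)]

-- volume of the infinity set is zero when the weak norm is finite
lemma vol_top_eq_zero (hp : 0 < p) (g : EuclideanSpace ℝ (Fin n) → ℝ≥0∞)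
    (hW : wLp n p g ≠ ∞) : volume {x | g x = ∞} = 0 := by
  set W := wLp n p g with hWdef
  set v := volume {x | g x = ∞} with hv
  have hb : ∀ k : ℕ, v ≤ (W / (k+1 : ℝ≥0∞)) ^ p := by
    intro k
    refine le_trans (measure_mono ?_) (vol_lt_of_wLp hp g
      (lt_of_lt_of_le zero_lt_one le_add_self).ne' (by simp))
    intro x hx
    rw [mem_setOf_eq, hx]
    exact lt_top_iff_ne_top.2 (by simp)
  by_contra hv0
  have hv0' : v ≠ 0 := hv0
  have hvp : ∀ k : ℕ, v ^ (1/p) ≤ W / (k+1 : ℝ≥0∞) := by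
    intro k
    calc v ^ (1/p) ≤ ((W / (k+1 : ℝ≥0∞)) ^ p) ^ (1/p) :=
          ENNReal.rpow_le_rpow (hb k) (by positivity)
      _ = W / (k+1 : ℝ≥0∞) := by
          rw [← ENNReal.rpow_mul, mul_one_div_cancel hp.ne', ENNReal.rpow_one]
  have hvpne : v ^ (1/p) ≠ 0 := by
    rw [ne_eq, ENNReal.rpow_eq_zero_iff]
    rintro (⟨h, _⟩ | ⟨_, h2⟩)
    · exact hv0' h
    · have : (0:ℝ) < 1/p := by positivity
      linarith
  have hvptop : v ^ (1/p) ≠ ∞ := by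
    refine (lt_of_le_of_lt (hvp 0) ?_).ne
    exact ENNReal.div_lt_top hW (by simp)
  have hk : ∀ k : ℕ, (k:ℝ≥0∞) + 1 ≤ W / v ^ (1/p) := by
    intro k
    rw [ENNReal.le_div_iff_mul_le (Or.inl hvpne) (Or.inl hvptop)]
    calc ((k:ℝ≥0∞)+1) * v^(1/p) ≤ ((k:ℝ≥0∞)+1) * (W/((k:ℝ≥0∞)+1)) :=
          mul_le_mul' le_rfl (hvp k)
      _ ≤ W := ENNReal.mul_div_le
  have htop : W / v ^ (1/p) ≠ ∞ := (ENNReal.div_lt_top hW hvpne).ne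
  obtain ⟨k, hk'⟩ := ENNReal.exists_nat_gt htop
  exact absurd (hk k) (not_le.2 (lt_of_lt_of_le hk' (le_add_of_nonneg_right zero_le_one)))

lemma exp2_aux (k : ℕ) (p : ℝ) :
    (2:ℝ≥0∞)^(k+1) * (((2:ℝ≥0∞)^k)^p)⁻¹ = 2 * ((2:ℝ≥0∞)^(1-p))^k := by
  have h1 : (2:ℝ≥0∞)^(k+1) * (((2:ℝ≥0∞)^k)^p)⁻¹
      = (2:ℝ≥0∞)^((((k+1):ℕ):ℝ) + (-((k:ℝ)*p))) := by
    rw [ENNReal.rpow_add _ _ (by norm_num) (by norm_num), ENNReal.rpow_natCast,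
      ← ENNReal.rpow_neg]
    rw [← ENNReal.rpow_natCast 2 k, ← ENNReal.rpow_mul]
    congr 1
    ring
  have h2 : 2 * ((2:ℝ≥0∞)^(1-p))^k = (2:ℝ≥0∞)^(1 + (1-p)*(k:ℝ)) := by
    rw [ENNReal.rpow_add _ _ (by norm_num) (by norm_num), ENNReal.rpow_one,
      ← ENNReal.rpow_natCast ((2:ℝ≥0∞)^(1-p)) k, ← ENNReal.rpow_mul]
  rw [h1, h2]
  congr 1
  push_cast
  ring

lemma wLp_maxFn_le (hn : 1 ≤ n) (hp : 1 < p) :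
    ∃ A : ℝ≥0∞, 1 ≤ A ∧ A ≠ ∞ ∧ ∀ g : EuclideanSpace ℝ (Fin n) → ℝ≥0∞,
      Measurable g → wLp n p (maxFn n g) ≤ A * wLp n p g := by
  have hp0 : (0:ℝ) < p := by linarith
  set cp := (1 - (2:ℝ≥0∞)^(1-p))⁻¹ with hcp
  have hcpt : cp ≠ ∞ := by
    rw [hcp, ENNReal.inv_ne_top]
    have : (2:ℝ≥0∞)^(1-p) < 1 :=
      ENNReal.rpow_lt_one_of_one_lt_of_neg (by norm_num) (by linarith)
    exact (tsub_pos_of_lt this).ne'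
  set K := (4:ℝ≥0∞)^n * (2 * cp) with hK
  have hKt : K ≠ ∞ := by
    rw [hK]
    exact ENNReal.mul_ne_top (by simp) (ENNReal.mul_ne_top (by simp) hcpt)
  set A := 1 ⊔ (2 * K^(1/p)) with hA
  have hA1 : 1 ≤ A := le_max_left _ _
  have hAt : A ≠ ∞ := by
    rw [hA, ne_eq, max_eq_top]
    push_neg
    exact ⟨by simp, ENNReal.mul_ne_top (by simp) (ENNReal.rpow_ne_top_of_nonneg (by positivity) hKt)⟩
  refine ⟨A, hA1, hAt, fun g hg => ?_⟩
  set W := wLp n p g with hWdef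
  by_cases hW : W = ∞
  · rw [hW, ENNReal.mul_top (by positivity)]
    exact le_top
  -- main case
  refine iSup₂_le fun l hl => ?_
  set a := (l:ℝ≥0∞) / 2 with ha
  have ha0 : a ≠ 0 := by
    rw [ha]
    simp [ENNReal.div_eq_zero_iff, hl.ne']
  have hat : a ≠ ∞ := by
    rw [ha]; exact (ENNReal.div_lt_top (by simp) (by norm_num)).ne
  set g₁ : EuclideanSpace ℝ (Fin n) → ℝ≥0∞ := fun x => if a < g x then g x else 0 with hg₁
  have hg₁meas : Measurable g₁ := Measurable.ite (hg measurableSet_Ioi) hg measurable_const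
  have step1 : ∀ x, maxFn n g x ≤ maxFn n g₁ x + a := by
    intro x
    have h1 : ∀ y, g y ≤ g₁ y + a := by
      intro y
      rw [hg₁]
      by_cases hy : a < g y
      · simp [hy, le_add_right]
      · simp only [hy, if_false, zero_add]
        exact le_of_not_gt hy
    exact (maxFn_mono h1 x).trans ((maxFn_add_le hg₁meas (fun _ => a) x).trans
      (add_le_add le_rfl (maxFn_const_le a x)))
  have step2 : {x | (l:ℝ≥0∞) < maxFn n g x} ⊆ {x | a < maxFn n g₁ x} := by
    intro x hx
    rw [mem_setOf_eq] at hx ⊢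
    by_contra h
    push_neg at h
    have : maxFn n g x ≤ (l:ℝ≥0∞) := by
      calc maxFn n g x ≤ maxFn n g₁ x + a := step1 x
        _ ≤ a + a := add_le_add h le_rfl
        _ = (l:ℝ≥0∞) := by rw [ha]; exact ENNReal.add_halves _
    exact absurd hx (not_lt.2 this)
  -- the layers
  set Lay : ℕ → Set (EuclideanSpace ℝ (Fin n)) :=
    fun k => {x | (2:ℝ≥0∞)^k * a < g x ∧ g x ≤ (2:ℝ≥0∞)^(k+1) * a} with hLay
  have hLaymeas : ∀ k, MeasurableSet (Lay k) :=
    fun k => (hg measurableSet_Ioi).inter (hg measurableSet_Iic)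
  have hpt : ∀ x, g₁ x ≤ (∑' k:ℕ, (Lay k).indicator (fun _ => (2:ℝ≥0∞)^(k+1) * a) x)
      + {x | g x = ∞}.indicator (fun _ => (⊤:ℝ≥0∞)) x := by
    intro x
    by_cases hax : a < g x
    · by_cases hxt : g x = ∞
      · rw [Set.indicator_of_mem (by exact hxt : x ∈ {x | g x = ∞})]
        simp
      · have hex : ∃ k : ℕ, g x ≤ (2:ℝ≥0∞)^(k+1) * a := by
          have hdiv : g x / a ≠ ∞ := (ENNReal.div_lt_top hxt ha0).ne
          obtain ⟨k, hk⟩ := ENNReal.exists_nat_gt hdiv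
          refine ⟨k, ?_⟩
          have h2k : (k:ℝ≥0∞) ≤ (2:ℝ≥0∞)^(k+1) := by
            calc (k:ℝ≥0∞) ≤ ((2^(k+1) : ℕ) : ℝ≥0∞) := by
                  exact_mod_cast (Nat.lt_two_pow_self (n := k)).le.trans (Nat.pow_le_pow_right (by norm_num) (Nat.le_succ k))
              _ = (2:ℝ≥0∞)^(k+1) := by push_cast; ring
          calc g x ≤ (g x / a) * a := by
                rw [div_eq_mul_inv, mul_assoc, ENNReal.inv_mul_cancel ha0 hat, mul_one]
            _ ≤ (k:ℝ≥0∞) * a := mul_le_mul' hk.le le_rfl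
            _ ≤ (2:ℝ≥0∞)^(k+1) * a := mul_le_mul' h2k le_rfl
        set k0 := Nat.find hex with hk0
        have hk0le : g x ≤ (2:ℝ≥0∞)^(k0+1) * a := Nat.find_spec hex
        have hk0lt : (2:ℝ≥0∞)^k0 * a < g x := by
          rcases Nat.eq_zero_or_pos k0 with h0 | h0
          · rw [h0]; simpa using hax
          · obtain ⟨m, hm⟩ := Nat.exists_eq_succ_of_ne_zero h0.ne'
            have := Nat.find_min hex (m := m) (by omega)
            rw [hm]
            exact lt_of_not_ge (by simpa using this)
        have hmem : x ∈ Lay k0 := ⟨hk0lt, hk0le⟩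
        calc g₁ x ≤ g x := by rw [hg₁]; simp [hax]
          _ ≤ (2:ℝ≥0∞)^(k0+1) * a := hk0le
          _ ≤ ∑' k:ℕ, (Lay k).indicator (fun _ => (2:ℝ≥0∞)^(k+1) * a) x := by
              have := ENNReal.le_tsum
                (f := fun k => (Lay k).indicator (fun _ => (2:ℝ≥0∞)^(k+1) * a) x) k0
              rwa [Set.indicator_of_mem hmem] at this
          _ ≤ _ := le_self_add
    · rw [hg₁]
      simp [hax]
  have hvtop : volume {x | g x = ∞} = 0 := vol_top_eq_zero hp0 g hW
  have step4 : ∫⁻ x, g₁ x ≤ (2 * a * a^(-p) * W^p) * cp := by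
    calc ∫⁻ x, g₁ x
        ≤ ∫⁻ x, (∑' k:ℕ, (Lay k).indicator (fun _ => (2:ℝ≥0∞)^(k+1) * a) x)
            + {x | g x = ∞}.indicator (fun _ => (⊤:ℝ≥0∞)) x := lintegral_mono hpt
      _ = (∫⁻ x, ∑' k:ℕ, (Lay k).indicator (fun _ => (2:ℝ≥0∞)^(k+1) * a) x)
            + ∫⁻ x, {x | g x = ∞}.indicator (fun _ => (⊤:ℝ≥0∞)) x := by
          refine lintegral_add_left (Measurable.ennreal_tsum fun k => Measurable.indicator measurable_const (hLaymeas k)) _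
      _ = (∑' k:ℕ, (2:ℝ≥0∞)^(k+1) * a * volume (Lay k)) + ⊤ * volume {x | g x = ∞} := by
          rw [lintegral_tsum (fun k => (Measurable.indicator measurable_const (hLaymeas k)).aemeasurable),
            lintegral_indicator_const
              (show MeasurableSet {x | g x = ∞} from hg (measurableSet_singleton ⊤))]
          congr 1
          exact tsum_congr fun k => lintegral_indicator_const (hLaymeas k) _
      _ = ∑' k:ℕ, (2:ℝ≥0∞)^(k+1) * a * volume (Lay k) := by rw [hvtop, mul_zero, add_zero]
      _ ≤ ∑' k:ℕ, (2:ℝ≥0∞)^(k+1) * a * (W/((2:ℝ≥0∞)^k * a))^p := by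
          refine ENNReal.tsum_le_tsum fun k => mul_le_mul' le_rfl ?_
          refine le_trans (measure_mono fun x hx => hx.1) ?_
          exact vol_lt_of_wLp hp0 g
            (mul_ne_zero (pow_ne_zero k (by norm_num)) ha0)
            (ENNReal.mul_ne_top (by simp) hat)
      _ = ∑' k:ℕ, (2 * a * a^(-p) * W^p) * ((2:ℝ≥0∞)^(1-p))^k := by
          refine tsum_congr fun k => ?_
          rw [ENNReal.div_rpow_of_nonneg _ _ hp0.le,
            ENNReal.mul_rpow_of_ne_top (by simp) hat, div_eq_mul_inv,
            ENNReal.mul_inv (Or.inl ((ENNReal.rpow_pos (pos_iff_ne_zero.2 (pow_ne_zero k (by norm_num))) (by simp)).ne'))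
              (Or.inl (ENNReal.rpow_ne_top_of_nonneg hp0.le (by simp))),
            ENNReal.rpow_neg a p]
          calc (2:ℝ≥0∞)^(k+1) * a * (W^p * ((((2:ℝ≥0∞)^k)^p)⁻¹ * ((a^p)⁻¹)))
              = ((2:ℝ≥0∞)^(k+1) * (((2:ℝ≥0∞)^k)^p)⁻¹) * (a * (a^p)⁻¹ * W^p) := by ring
            _ = (2 * ((2:ℝ≥0∞)^(1-p))^k) * (a * (a^p)⁻¹ * W^p) := by rw [exp2_aux]
            _ = 2 * a * (a^p)⁻¹ * W^p * ((2:ℝ≥0∞)^(1-p))^k := by ring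
      _ = (2 * a * a^(-p) * W^p) * cp := by
          rw [ENNReal.tsum_mul_left, ENNReal.tsum_geometric, hcp, ENNReal.rpow_neg]
  -- combine
  have step5 : volume {x | (l:ℝ≥0∞) < maxFn n g x} ≤ K * W^p * a^(-p) := by
    calc volume {x | (l:ℝ≥0∞) < maxFn n g x}
        ≤ volume {x | a < maxFn n g₁ x} := measure_mono step2
      _ ≤ (4:ℝ≥0∞)^n / a * ∫⁻ x, g₁ x := weak_one_one hn g₁ ha0 hat
      _ ≤ (4:ℝ≥0∞)^n / a * ((2 * a * a^(-p) * W^p) * cp) := mul_le_mul' le_rfl step4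
      _ = K * W^p * a^(-p) := by
          rw [div_eq_mul_inv, hK]
          rw [show (4:ℝ≥0∞)^n * a⁻¹ * (2 * a * a^(-p) * W^p * cp)
            = ((4:ℝ≥0∞)^n * (2*cp) * W^p * a^(-p)) * (a⁻¹ * a) from by ring,
            ENNReal.inv_mul_cancel ha0 hat, mul_one]
  calc (l:ℝ≥0∞) * volume {x | (l:ℝ≥0∞) < maxFn n g x} ^ (1/p)
      ≤ (l:ℝ≥0∞) * (K * W^p * a^(-p)) ^ (1/p) :=
        mul_le_mul' le_rfl (ENNReal.rpow_le_rpow step5 (by positivity))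
    _ = (l:ℝ≥0∞) * (K^(1/p) * W * a⁻¹) := by
        rw [ENNReal.mul_rpow_of_nonneg _ _ (by positivity),
          ENNReal.mul_rpow_of_nonneg _ _ (by positivity)]
        congr 2
        · rw [← ENNReal.rpow_mul, mul_one_div_cancel hp0.ne', ENNReal.rpow_one]
        · rw [← ENNReal.rpow_mul, neg_mul, mul_one_div_cancel hp0.ne', ENNReal.rpow_neg_one]
    _ = (2 * K^(1/p)) * W := by
        have hla : (l:ℝ≥0∞) * a⁻¹ = 2 := by
          rw [ha, div_eq_mul_inv, ENNReal.mul_inv (Or.inr (by norm_num)) (Or.inl (by simp)), inv_inv,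
            ← mul_assoc, ENNReal.mul_inv_cancel (by exact_mod_cast hl.ne') (by simp), one_mul]
        calc (l:ℝ≥0∞) * (K^(1/p) * W * a⁻¹) = ((l:ℝ≥0∞) * a⁻¹) * (K^(1/p) * W) := by ring
          _ = 2 * (K^(1/p) * W) := by rw [hla]
          _ = (2 * K^(1/p)) * W := by ring
    _ ≤ A * W := mul_le_mul' (le_max_right _ _) le_rfl

-- powers of two helpers
lemma two_rpow_add (a b : ℝ) : (2:ℝ≥0∞)^a * (2:ℝ≥0∞)^b = (2:ℝ≥0∞)^(a+b) :=
  (ENNReal.rpow_add _ _ (by norm_num) (by norm_num)).symm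

lemma two_rpow_inv (a : ℝ) : ((2:ℝ≥0∞)^a)⁻¹ = (2:ℝ≥0∞)^(-a) := by
  rw [ENNReal.rpow_neg]

lemma two_rpow_rpow (a s : ℝ) : ((2:ℝ≥0∞)^a)^s = (2:ℝ≥0∞)^(a*s) :=
  (ENNReal.rpow_mul 2 a s).symm

lemma two_rpow_mono {a b : ℝ} (h : a ≤ b) : (2:ℝ≥0∞)^a ≤ (2:ℝ≥0∞)^b :=
  ENNReal.rpow_le_rpow_of_exponent_le (by norm_num) h

lemma two_rpow_ne_zero (a : ℝ) : (2:ℝ≥0∞)^a ≠ 0 :=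
  (ENNReal.rpow_pos (by norm_num) (by norm_num)).ne'

lemma two_rpow_ne_top (a : ℝ) : (2:ℝ≥0∞)^a ≠ ∞ := by
  simp [ENNReal.rpow_eq_top_iff]

lemma two_rpow_lt_one {a : ℝ} (ha : a < 0) : (2:ℝ≥0∞)^a < 1 :=
  ENNReal.rpow_lt_one_of_one_lt_of_neg (by norm_num) ha

-- equivalence of ℕ with integers ≥ j0
def leEquiv (j0 : ℤ) : ℕ ≃ {j : ℤ // j0 ≤ j} where
  toFun k := ⟨j0 + k, by omega⟩
  invFun j := (j.1 - j0).toNat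
  left_inv k := by simp
  right_inv j := by
    ext
    simp only
    omega

def geEquiv (jt : ℤ) : ℕ ≃ {j : ℤ // j ≤ jt} where
  toFun k := ⟨jt - k, by omega⟩
  invFun j := (jt - j.1).toNat
  left_inv k := by simp
  right_inv j := by
    ext
    simp only
    omega

lemma geomGe (j0 : ℤ) {δ : ℝ} (hδ : 0 < δ) :
    ∑' j : {j : ℤ // j0 ≤ j}, (2:ℝ≥0∞) ^ (-(δ * ((j.1:ℝ) - (j0:ℝ))))
      = (1 - (2:ℝ≥0∞)^(-δ))⁻¹ := by
  rw [← Equiv.tsum_eq (leEquiv j0) (fun j => (2:ℝ≥0∞) ^ (-(δ * ((j.1:ℝ) - (j0:ℝ)))))]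
  have : ∀ k : ℕ, (2:ℝ≥0∞) ^ (-(δ * ((((leEquiv j0) k).1:ℝ) - (j0:ℝ))))
      = ((2:ℝ≥0∞)^(-δ))^k := by
    intro k
    rw [← ENNReal.rpow_natCast ((2:ℝ≥0∞)^(-δ)) k, two_rpow_rpow]
    congr 1
    simp only [leEquiv, Equiv.coe_fn_mk]
    push_cast
    ring
  rw [tsum_congr this, ENNReal.tsum_geometric]

lemma geomLe (jt : ℤ) {δ : ℝ} (hδ : 0 < δ) :
    ∑' j : {j : ℤ // j ≤ jt}, (2:ℝ≥0∞) ^ (-(δ * ((jt:ℝ) - (j.1:ℝ))))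
      = (1 - (2:ℝ≥0∞)^(-δ))⁻¹ := by
  rw [← Equiv.tsum_eq (geEquiv jt) (fun j => (2:ℝ≥0∞) ^ (-(δ * ((jt:ℝ) - (j.1:ℝ)))))]
  have : ∀ k : ℕ, (2:ℝ≥0∞) ^ (-(δ * ((jt:ℝ) - (((geEquiv jt) k).1:ℝ))))
      = ((2:ℝ≥0∞)^(-δ))^k := by
    intro k
    rw [← ENNReal.rpow_natCast ((2:ℝ≥0∞)^(-δ)) k, two_rpow_rpow]
    congr 1
    simp only [geEquiv, Equiv.coe_fn_mk]
    push_cast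
    ring
  rw [tsum_congr this, ENNReal.tsum_geometric]

-- weak-norm of a series bound
lemma wLp_tsum_le {n : ℕ} {p : ℝ} (hp : 0 < p) {ι : Type} [Countable ι]
    (c θ : ι → ℝ≥0∞) (hc0 : ∀ i, c i ≠ 0) (hct : ∀ i, c i ≠ ∞)
    (hθ0 : ∀ i, θ i ≠ 0) (hθt : ∀ i, θ i ≠ ∞) (hθ1 : ∑' i, θ i ≤ 1)
    (h : EuclideanSpace ℝ (Fin n) → ℝ≥0∞) (G : ι → EuclideanSpace ℝ (Fin n) → ℝ≥0∞)
    (hh : ∀ x, h x ≤ ∑' i, c i * G i x) :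
    wLp n p h ≤ (∑' i, (c i * wLp n p (G i) / θ i)^p)^(1/p) := by
  refine iSup₂_le fun l hl => ?_
  have hl0 : (l:ℝ≥0∞) ≠ 0 := by exact_mod_cast hl.ne'
  have hlt : (l:ℝ≥0∞) ≠ ∞ := by simp
  have hcover : {x | (l:ℝ≥0∞) < h x} ⊆ ⋃ i, {x | θ i * l / c i < G i x} := by
    intro x hx
    rw [mem_setOf_eq] at hx
    by_contra hco
    simp only [mem_iUnion, mem_setOf_eq, not_exists, not_lt] at hco
    have : h x ≤ (l:ℝ≥0∞) := by
      calc h x ≤ ∑' i, c i * G i x := hh x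
        _ ≤ ∑' i, c i * (θ i * l / c i) :=
            ENNReal.tsum_le_tsum fun i => mul_le_mul' le_rfl (hco i)
        _ = ∑' i, θ i * l := by
            refine tsum_congr fun i => ?_
            rw [ENNReal.mul_div_cancel (hc0 i) (hct i)]
        _ = (∑' i, θ i) * l := ENNReal.tsum_mul_right
        _ ≤ 1 * l := mul_le_mul' hθ1 le_rfl
        _ = l := one_mul _
    exact absurd hx (not_lt.2 this)
  have hvol : volume {x | (l:ℝ≥0∞) < h x} ≤ ∑' i, ((c i * wLp n p (G i) / θ i) / l)^p := by
    calc volume {x | (l:ℝ≥0∞) < h x} ≤ ∑' i, volume {x | θ i * l / c i < G i x} :=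
          (measure_mono hcover).trans (measure_iUnion_le _)
      _ ≤ ∑' i, ((c i * wLp n p (G i) / θ i) / l)^p := by
          refine ENNReal.tsum_le_tsum fun i => ?_
          have ht0 : θ i * l / c i ≠ 0 := by
            refine (ENNReal.div_pos (mul_ne_zero (hθ0 i) hl0) (hct i)).ne'
          have htt : θ i * l / c i ≠ ∞ := by
            refine (ENNReal.div_lt_top (ENNReal.mul_ne_top (hθt i) hlt) (hc0 i)).ne
          refine le_trans (vol_lt_of_wLp hp (G i) ht0 htt) ?_
          refine ENNReal.rpow_le_rpow (le_of_eq ?_) hp.le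
          have hinv : (θ i * (l:ℝ≥0∞) / c i)⁻¹ = (θ i)⁻¹ * ((l:ℝ≥0∞))⁻¹ * c i := by
            rw [div_eq_mul_inv, ENNReal.mul_inv (Or.inl (mul_ne_zero (hθ0 i) hl0))
              (Or.inl (ENNReal.mul_ne_top (hθt i) hlt)), inv_inv,
              ENNReal.mul_inv (Or.inl (hθ0 i)) (Or.inl (hθt i))]
          rw [div_eq_mul_inv (wLp n p (G i)), hinv]
          simp only [div_eq_mul_inv]
          ring
  calc (l:ℝ≥0∞) * volume {x | (l:ℝ≥0∞) < h x} ^ (1/p)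
      ≤ (l:ℝ≥0∞) * (∑' i, ((c i * wLp n p (G i) / θ i) / l)^p)^(1/p) :=
        mul_le_mul' le_rfl (ENNReal.rpow_le_rpow hvol (by positivity))
    _ = (l:ℝ≥0∞) * ((∑' i, (c i * wLp n p (G i) / θ i)^p) * (((l:ℝ≥0∞)^p)⁻¹))^(1/p) := by
        congr 1
        simp only [div_eq_mul_inv, ENNReal.mul_rpow_of_nonneg _ _ hp.le,
          ENNReal.inv_rpow, ENNReal.tsum_mul_right]
    _ = (l:ℝ≥0∞) * ((∑' i, (c i * wLp n p (G i) / θ i)^p)^(1/p) * ((l:ℝ≥0∞))⁻¹) := by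
        rw [ENNReal.mul_rpow_of_nonneg _ _ (by positivity), ← ENNReal.inv_rpow,
          ← ENNReal.rpow_mul, mul_one_div_cancel (by positivity : p ≠ 0), ENNReal.rpow_one]
    _ = (∑' i, (c i * wLp n p (G i) / θ i)^p)^(1/p) * ((l:ℝ≥0∞) * ((l:ℝ≥0∞))⁻¹) := by ring
    _ = _ := by rw [ENNReal.mul_inv_cancel hl0 hlt, mul_one]

lemma unweight {e1 e2 : ℝ} {W Z : ℝ≥0∞} (h : (2:ℝ≥0∞)^e1 * (2:ℝ≥0∞)^e2 * W ≤ Z) :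
    W ≤ (2:ℝ≥0∞)^(-e1) * (2:ℝ≥0∞)^(-e2) * Z := by
  calc W = ((2:ℝ≥0∞)^(-e1) * (2:ℝ≥0∞)^e1) * ((2:ℝ≥0∞)^(-e2) * (2:ℝ≥0∞)^e2) * W := by
        rw [two_rpow_add, two_rpow_add]
        norm_num
    _ = (2:ℝ≥0∞)^(-e1) * (2:ℝ≥0∞)^(-e2) * ((2:ℝ≥0∞)^e1 * (2:ℝ≥0∞)^e2 * W) := by ring
    _ ≤ (2:ℝ≥0∞)^(-e1) * (2:ℝ≥0∞)^(-e2) * Z := mul_le_mul' le_rfl h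

lemma P8 (a1 a2 a3 a4 a5 a6 a7 a8 : ℝ) :
    (2:ℝ≥0∞)^a1 * (2:ℝ≥0∞)^a2 * (2:ℝ≥0∞)^a3 * (2:ℝ≥0∞)^a4 * (2:ℝ≥0∞)^a5 * (2:ℝ≥0∞)^a6
      * (2:ℝ≥0∞)^a7 * (2:ℝ≥0∞)^a8 = (2:ℝ≥0∞)^(a1+a2+a3+a4+a5+a6+a7+a8) := by
  simp only [two_rpow_add]

lemma exponent_ineq {β m m' ε γ : ℝ} (hβ : 0 < β) (hm : 1 < m) (hm' : 0 ≤ m')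
    (hε : ε = β/4) (hγ : γ = β/6)
    {rj rjs rjt rj' rj'2 : ℝ} (h1 : rj' ≤ rjt) (h2 : rjt ≤ rjs) (h3 : rjs ≤ rj)
    (h4 : rj'2 = rj' - 2) :
    2*(rj'-rjt)*m' + rj'*(β-1) + (rj' - rj) + 2*(rj - rjs)*(1-m) + (-(2*(rj-rjs)*m))
      + (-(rj*(β-1))) + ε*(rj - rj'2) + ε*(rjs - rjt)
    ≤ -(γ*(rj - rj'2)) + (-(γ*(rjs - rjt)))
      + (-(γ*(rjt - rj')) + (2*ε + 2*γ)) := by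
  subst hε hγ h4
  nlinarith [mul_nonneg (sub_nonneg.2 h3) (by linarith : (0:ℝ) ≤ m - 1),
    mul_nonneg (sub_nonneg.2 h2) hβ.le, mul_nonneg (sub_nonneg.2 h1) hβ.le,
    mul_nonneg (sub_nonneg.2 h3) hβ.le, mul_nonneg (sub_nonneg.2 h1) hm']


/-- Section 5 (second small-time part of the couple-product flow): if for `j' ≤ j_t`
`F_{j',j_t} ≤ C₀ ∑_{j≥j'-2} ∑_{j_t≤j_s≤j} 2^{j'-j} 2^{2(j-j_s)(1-m)} M u_{j,j_s}` pointwise,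
then
`sup_{j_t} ∑_{j'≤j_t} (2^{2(j'-j_t)m'} 2^{j'(n/p-1)} ‖F_{j',j_t}‖_{L^{p,∞}})^q
  ≤ C sup_{j_s} ∑_{j≥j_s} (2^{2(j-j_s)m} 2^{j(n/p-1)} ‖u_{j,j_s}‖_{L^{p,∞}})^q`. -/
theorem couple_small_time_second_estimate (n : ℕ) (hn : 1 ≤ n) (p q m' m : ℝ)
    (hp : 1 < p) (hq : 1 ≤ q) (hm'0 : 0 ≤ m') (hm' : m' < 1 / 2) (hm : 1 < m)
    (C₀ : NNReal) (hC₀ : 0 < C₀)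
    (u : ℤ → ℤ → EuclideanSpace ℝ (Fin n) → ℝ≥0∞)
    (F : ℤ → ℤ → EuclideanSpace ℝ (Fin n) → ℝ≥0∞)
    (hu : ∀ j js, Measurable (u j js)) (hF : ∀ j' jt, Measurable (F j' jt))
    (hFu : ∀ (jt j' : ℤ), j' ≤ jt → ∀ x : EuclideanSpace ℝ (Fin n),
      F j' jt x ≤ (C₀ : ℝ≥0∞) *
        ∑' j : {j : ℤ // j' - 2 ≤ j}, ∑' js : {js : ℤ // jt ≤ js ∧ js ≤ j.1},
          (2 : ℝ≥0∞) ^ ((j' : ℝ) - (j.1 : ℝ)) *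
            (2 : ℝ≥0∞) ^ (2 * ((j.1 : ℝ) - (js.1 : ℝ)) * (1 - m)) *
            maxFn n (u j.1 js.1) x) :
    ∃ C : NNReal, 0 < C ∧
      (⨆ jt : ℤ, ∑' j' : {j' : ℤ // j' ≤ jt},
          ((2 : ℝ≥0∞) ^ (2 * ((j'.1 : ℝ) - (jt : ℝ)) * m') *
            (2 : ℝ≥0∞) ^ ((j'.1 : ℝ) * ((n : ℝ) / p - 1)) * wLp n p (F j'.1 jt)) ^ q)
        ≤ (C : ℝ≥0∞) *
          ⨆ js : ℤ, ∑' j : {j : ℤ // js ≤ j},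
            ((2 : ℝ≥0∞) ^ (2 * ((j.1 : ℝ) - (js : ℝ)) * m) *
              (2 : ℝ≥0∞) ^ ((j.1 : ℝ) * ((n : ℝ) / p - 1)) * wLp n p (u j.1 js)) ^ q := by
  have hp0 : (0:ℝ) < p := by linarith
  have hq0 : (0:ℝ) < q := by linarith
  set β : ℝ := (n:ℝ)/p with hβdef
  have hβ : 0 < β := div_pos (by exact_mod_cast hn) hp0
  set ε : ℝ := β/4 with hεdef
  set γ : ℝ := β/6 with hγdef
  have hε : 0 < ε := by positivity
  have hγ : 0 < γ := by positivity
  set cε := (1 - (2:ℝ≥0∞)^(-ε))⁻¹ with hcε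
  have hcε0 : cε ≠ 0 := by
    rw [hcε, ne_eq, ENNReal.inv_eq_zero]
    exact (lt_of_le_of_lt (tsub_le_self.trans le_rfl) (by norm_num : (1:ℝ≥0∞) < ⊤)).ne
  have hcεt : cε ≠ ∞ := by
    rw [hcε, ENNReal.inv_ne_top]
    exact (tsub_pos_of_lt (two_rpow_lt_one (by linarith))).ne'
  set θ0 := cε⁻¹ * cε⁻¹ with hθ0def
  have hθ00 : θ0 ≠ 0 := mul_ne_zero (ENNReal.inv_ne_zero.2 hcεt) (ENNReal.inv_ne_zero.2 hcεt)
  have hθ0t : θ0 ≠ ∞ := ENNReal.mul_ne_top (ENNReal.inv_ne_top.2 hcε0) (ENNReal.inv_ne_top.2 hcε0)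
  obtain ⟨A, hA1, hAt, hAb⟩ := wLp_maxFn_le hn hp
  have hA0 : A ≠ 0 := by intro h; rw [h] at hA1; exact absurd hA1 (by norm_num)
  set S := ⨆ js : ℤ, ∑' j : {j : ℤ // js ≤ j},
      ((2 : ℝ≥0∞) ^ (2 * ((j.1 : ℝ) - (js : ℝ)) * m) *
        (2 : ℝ≥0∞) ^ ((j.1 : ℝ) * ((n : ℝ) / p - 1)) * wLp n p (u j.1 js)) ^ q with hSdef
  -- bound on wLp of u from S
  have hWu : ∀ (js j : ℤ), js ≤ j → wLp n p (u j js) ≤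
      (2:ℝ≥0∞)^(-(2 * ((j : ℝ) - (js : ℝ)) * m)) * (2:ℝ≥0∞)^(-((j : ℝ) * (β - 1)))
        * S^(1/q) := by
    intro js j hjsj
    refine unweight ?_
    have h1 : ((2 : ℝ≥0∞) ^ (2 * ((j : ℝ) - (js : ℝ)) * m) *
        (2 : ℝ≥0∞) ^ ((j : ℝ) * (β - 1)) * wLp n p (u j js)) ^ q ≤ S := by
      refine le_trans ?_ (le_iSup _ js)
      exact ENNReal.le_tsum (⟨j, hjsj⟩ : {j : ℤ // js ≤ j})
    calc (2 : ℝ≥0∞) ^ (2 * ((j : ℝ) - (js : ℝ)) * m) *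
        (2 : ℝ≥0∞) ^ ((j : ℝ) * (β - 1)) * wLp n p (u j js)
        = (((2 : ℝ≥0∞) ^ (2 * ((j : ℝ) - (js : ℝ)) * m) *
          (2 : ℝ≥0∞) ^ ((j : ℝ) * (β - 1)) * wLp n p (u j js)) ^ q) ^ (1/q) := by
          rw [← ENNReal.rpow_mul, mul_one_div_cancel hq0.ne', ENNReal.rpow_one]
      _ ≤ S ^ (1/q) := ENNReal.rpow_le_rpow h1 (by positivity)
  -- more constants
  set cγ := (1 - (2:ℝ≥0∞)^(-(γ*p)))⁻¹ with hcγ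
  have hcγt : cγ ≠ ∞ := by
    rw [hcγ, ENNReal.inv_ne_top]
    exact (tsub_pos_of_lt (two_rpow_lt_one (by nlinarith))).ne'
  set cq := (1 - (2:ℝ≥0∞)^(-(γ*q)))⁻¹ with hcq
  have hcqt : cq ≠ ∞ := by
    rw [hcq, ENNReal.inv_ne_top]
    exact (tsub_pos_of_lt (two_rpow_lt_one (by nlinarith))).ne'
  set Gp := (cγ * cγ)^(1/p) with hGp
  have hGpt : Gp ≠ ∞ :=
    ENNReal.rpow_ne_top_of_nonneg (by positivity) (ENNReal.mul_ne_top hcγt hcγt)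
  set Kbig := (C₀:ℝ≥0∞) * A * θ0⁻¹ * (2:ℝ≥0∞)^(2*ε+2*γ) * Gp with hKbig
  have hKbigt : Kbig ≠ ∞ := by
    rw [hKbig]
    exact ENNReal.mul_ne_top (ENNReal.mul_ne_top (ENNReal.mul_ne_top
      (ENNReal.mul_ne_top ENNReal.coe_ne_top hAt) (ENNReal.inv_ne_top.2 hθ00))
      (two_rpow_ne_top _)) hGpt
  set T := Kbig^q * cq with hT
  have hTt : T ≠ ∞ :=
    ENNReal.mul_ne_top (ENNReal.rpow_ne_top_of_nonneg hq0.le hKbigt) hcqt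
  -- the key estimate for a single (jt, j')
  have key : ∀ (jt : ℤ) (j' : {j' : ℤ // j' ≤ jt}),
      (2:ℝ≥0∞)^(2*((j'.1:ℝ) - (jt:ℝ))*m') * (2:ℝ≥0∞)^((j'.1:ℝ)*(β-1)) * wLp n p (F j'.1 jt)
        ≤ Kbig * S^(1/q) * (2:ℝ≥0∞)^(-(γ*((jt:ℝ) - (j'.1:ℝ)))) := by
    intro jt j'
    have hj'le : j'.1 ≤ jt := j'.2
    have hcast : ((j'.1 - 2 : ℤ) : ℝ) = (j'.1 : ℝ) - 2 := by push_cast; ring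
    set c : (Σ (j : {j : ℤ // j'.1 - 2 ≤ j}), {js : ℤ // jt ≤ js ∧ js ≤ j.1}) → ℝ≥0∞ :=
      fun i => (C₀:ℝ≥0∞) * ((2:ℝ≥0∞)^((j'.1:ℝ) - (i.1.1:ℝ)) *
        (2:ℝ≥0∞)^(2*((i.1.1:ℝ) - (i.2.1:ℝ))*(1-m))) with hcdef
    set θ : (Σ (j : {j : ℤ // j'.1 - 2 ≤ j}), {js : ℤ // jt ≤ js ∧ js ≤ j.1}) → ℝ≥0∞ :=
      fun i => θ0 * ((2:ℝ≥0∞)^(-(ε*((i.1.1:ℝ) - (((j'.1 - 2 : ℤ)):ℝ)))) *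
        (2:ℝ≥0∞)^(-(ε*((i.2.1:ℝ) - (jt:ℝ))))) with hθdef
    set G : (Σ (j : {j : ℤ // j'.1 - 2 ≤ j}), {js : ℤ // jt ≤ js ∧ js ≤ j.1}) →
        EuclideanSpace ℝ (Fin n) → ℝ≥0∞ := fun i => maxFn n (u i.1.1 i.2.1) with hGdef
    have hc0 : ∀ i, c i ≠ 0 := fun i => mul_ne_zero
      (by exact_mod_cast hC₀.ne') (mul_ne_zero (two_rpow_ne_zero _) (two_rpow_ne_zero _))
    have hct : ∀ i, c i ≠ ∞ := fun i => ENNReal.mul_ne_top ENNReal.coe_ne_top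
      (ENNReal.mul_ne_top (two_rpow_ne_top _) (two_rpow_ne_top _))
    have hθ0' : ∀ i, θ i ≠ 0 := fun i => mul_ne_zero hθ00
      (mul_ne_zero (two_rpow_ne_zero _) (two_rpow_ne_zero _))
    have hθt' : ∀ i, θ i ≠ ∞ := fun i => ENNReal.mul_ne_top hθ0t
      (ENNReal.mul_ne_top (two_rpow_ne_top _) (two_rpow_ne_top _))
    have hθ1 : ∑' i, θ i ≤ 1 := by
      calc ∑' i, θ i
          = ∑' (j : {j : ℤ // j'.1 - 2 ≤ j}), ∑' (js : {js : ℤ // jt ≤ js ∧ js ≤ j.1}),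
            θ ⟨j, js⟩ := ENNReal.tsum_sigma' θ
        _ ≤ ∑' (j : {j : ℤ // j'.1 - 2 ≤ j}), (θ0 * cε) *
            (2:ℝ≥0∞)^(-(ε*((j.1:ℝ) - (((j'.1 - 2 : ℤ)):ℝ)))) := by
            refine ENNReal.tsum_le_tsum fun j => ?_
            calc ∑' (js : {js : ℤ // jt ≤ js ∧ js ≤ j.1}), θ ⟨j, js⟩
                = (θ0 * (2:ℝ≥0∞)^(-(ε*((j.1:ℝ) - (((j'.1 - 2 : ℤ)):ℝ))))) *
                  ∑' (js : {js : ℤ // jt ≤ js ∧ js ≤ j.1}),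
                    (2:ℝ≥0∞)^(-(ε*((js.1:ℝ) - (jt:ℝ)))) := by
                  rw [← ENNReal.tsum_mul_left]
                  exact tsum_congr fun js => by rw [hθdef]; ring
              _ ≤ (θ0 * (2:ℝ≥0∞)^(-(ε*((j.1:ℝ) - (((j'.1 - 2 : ℤ)):ℝ))))) * cε := by
                  refine mul_le_mul' le_rfl ?_
                  refine le_trans (le_of_eq ?_) (le_trans
                    (ENNReal.tsum_comp_le_tsum_of_injective
                      (f := fun js : {js : ℤ // jt ≤ js ∧ js ≤ j.1} =>
                        (⟨js.1, js.2.1⟩ : {js : ℤ // jt ≤ js}))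
                      (fun a b hab => by
                        apply Subtype.ext
                        have := congrArg Subtype.val hab
                        simpa using this)
                      (fun js => (2:ℝ≥0∞)^(-(ε*((js.1:ℝ) - (jt:ℝ)))))) (le_of_eq ?_))
                  · rfl
                  · rw [geomGe jt hε, ← hcε]
              _ = (θ0 * cε) * (2:ℝ≥0∞)^(-(ε*((j.1:ℝ) - (((j'.1 - 2 : ℤ)):ℝ)))) := by ring
        _ = (θ0 * cε) * cε := by rw [ENNReal.tsum_mul_left, geomGe _ hε, ← hcε]
        _ = 1 := by
            rw [hθ0def, show cε⁻¹ * cε⁻¹ * cε * cε = (cε⁻¹ * cε) * (cε⁻¹ * cε) from by ring,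
              ENNReal.inv_mul_cancel hcε0 hcεt]
            norm_num
    have hh : ∀ x, F j'.1 jt x ≤ ∑' i, c i * G i x := by
      intro x
      refine le_trans (hFu jt j'.1 hj'le x) (le_of_eq ?_)
      rw [← ENNReal.tsum_mul_left, ENNReal.tsum_sigma' (fun i => c i * G i x)]
      refine tsum_congr fun j => ?_
      rw [← ENNReal.tsum_mul_left]
      refine tsum_congr fun js => ?_
      rw [hcdef, hGdef]
      ring
    have K1 := wLp_tsum_le hp0 c θ hc0 hct hθ0' hθt' hθ1 (F j'.1 jt) G hh
    -- the per-index pointwise bound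
    set Kb := (C₀:ℝ≥0∞) * A * θ0⁻¹ * (2:ℝ≥0∞)^(2*ε+2*γ) * S^(1/q) *
      (2:ℝ≥0∞)^(-(γ*((jt:ℝ) - (j'.1:ℝ)))) with hKb
    have K3 : ∀ i, (2:ℝ≥0∞)^(2*((j'.1:ℝ) - (jt:ℝ))*m') * (2:ℝ≥0∞)^((j'.1:ℝ)*(β-1)) *
        (c i * wLp n p (G i) / θ i) ≤
        Kb * ((2:ℝ≥0∞)^(-(γ*((i.1.1:ℝ) - (((j'.1 - 2 : ℤ)):ℝ)))) *
          (2:ℝ≥0∞)^(-(γ*((i.2.1:ℝ) - (jt:ℝ))))) := by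
      rintro ⟨⟨j, hj⟩, ⟨js, hjs1, hjs2⟩⟩
      have r1 : (j'.1:ℝ) ≤ (jt:ℝ) := Int.cast_le.2 hj'le
      have r2 : (jt:ℝ) ≤ (js:ℝ) := Int.cast_le.2 hjs1
      have r3 : (js:ℝ) ≤ (j:ℝ) := Int.cast_le.2 hjs2
      have hWm : wLp n p (G ⟨⟨j, hj⟩, ⟨js, hjs1, hjs2⟩⟩) ≤
          A * ((2:ℝ≥0∞)^(-(2*((j:ℝ) - (js:ℝ))*m)) * (2:ℝ≥0∞)^(-((j:ℝ)*(β-1))) * S^(1/q)) := by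
        rw [hGdef]
        refine le_trans (hAb _ (hu j js)) (mul_le_mul' le_rfl ?_)
        exact hWu js j hjs2
      have hθinv : (θ ⟨⟨j, hj⟩, ⟨js, hjs1, hjs2⟩⟩)⁻¹ = θ0⁻¹ *
          ((2:ℝ≥0∞)^(ε*((j:ℝ) - (((j'.1 - 2 : ℤ)):ℝ))) * (2:ℝ≥0∞)^(ε*((js:ℝ) - (jt:ℝ)))) := by
        rw [hθdef]
        simp only
        rw [ENNReal.mul_inv (Or.inl hθ00) (Or.inl hθ0t),
          ENNReal.mul_inv (Or.inl (two_rpow_ne_zero _)) (Or.inl (two_rpow_ne_top _)),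
          two_rpow_inv, two_rpow_inv, neg_neg, neg_neg]
      calc (2:ℝ≥0∞)^(2*((j'.1:ℝ) - (jt:ℝ))*m') * (2:ℝ≥0∞)^((j'.1:ℝ)*(β-1)) *
          (c ⟨⟨j, hj⟩, ⟨js, hjs1, hjs2⟩⟩ * wLp n p (G ⟨⟨j, hj⟩, ⟨js, hjs1, hjs2⟩⟩) /
            θ ⟨⟨j, hj⟩, ⟨js, hjs1, hjs2⟩⟩)
          = (2:ℝ≥0∞)^(2*((j'.1:ℝ) - (jt:ℝ))*m') * (2:ℝ≥0∞)^((j'.1:ℝ)*(β-1)) *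
            (c ⟨⟨j, hj⟩, ⟨js, hjs1, hjs2⟩⟩ * wLp n p (G ⟨⟨j, hj⟩, ⟨js, hjs1, hjs2⟩⟩) *
              (θ ⟨⟨j, hj⟩, ⟨js, hjs1, hjs2⟩⟩)⁻¹) := by rw [div_eq_mul_inv]
        _ ≤ (2:ℝ≥0∞)^(2*((j'.1:ℝ) - (jt:ℝ))*m') * (2:ℝ≥0∞)^((j'.1:ℝ)*(β-1)) *
            (c ⟨⟨j, hj⟩, ⟨js, hjs1, hjs2⟩⟩ *
              (A * ((2:ℝ≥0∞)^(-(2*((j:ℝ) - (js:ℝ))*m)) * (2:ℝ≥0∞)^(-((j:ℝ)*(β-1))) * S^(1/q))) *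
              (θ ⟨⟨j, hj⟩, ⟨js, hjs1, hjs2⟩⟩)⁻¹) :=
            mul_le_mul' le_rfl (mul_le_mul' (mul_le_mul' le_rfl hWm) le_rfl)
        _ = ((C₀:ℝ≥0∞) * A * θ0⁻¹ * S^(1/q)) *
            ((2:ℝ≥0∞)^(2*((j'.1:ℝ) - (jt:ℝ))*m') * (2:ℝ≥0∞)^((j'.1:ℝ)*(β-1)) *
             (2:ℝ≥0∞)^((j'.1:ℝ) - (j:ℝ)) * (2:ℝ≥0∞)^(2*((j:ℝ) - (js:ℝ))*(1-m)) *
             (2:ℝ≥0∞)^(-(2*((j:ℝ) - (js:ℝ))*m)) * (2:ℝ≥0∞)^(-((j:ℝ)*(β-1))) *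
             (2:ℝ≥0∞)^(ε*((j:ℝ) - (((j'.1 - 2 : ℤ)):ℝ))) * (2:ℝ≥0∞)^(ε*((js:ℝ) - (jt:ℝ)))) := by
            rw [hθinv, hcdef]
            simp only
            ring
        _ = ((C₀:ℝ≥0∞) * A * θ0⁻¹ * S^(1/q)) *
            (2:ℝ≥0∞)^(2*((j'.1:ℝ) - (jt:ℝ))*m' + (j'.1:ℝ)*(β-1) + ((j'.1:ℝ) - (j:ℝ)) +
              2*((j:ℝ) - (js:ℝ))*(1-m) + (-(2*((j:ℝ) - (js:ℝ))*m)) + (-((j:ℝ)*(β-1))) +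
              ε*((j:ℝ) - (((j'.1 - 2 : ℤ)):ℝ)) + ε*((js:ℝ) - (jt:ℝ))) := by rw [P8]
        _ ≤ ((C₀:ℝ≥0∞) * A * θ0⁻¹ * S^(1/q)) *
            (2:ℝ≥0∞)^(-(γ*((j:ℝ) - (((j'.1 - 2 : ℤ)):ℝ))) + (-(γ*((js:ℝ) - (jt:ℝ)))) +
              (-(γ*((jt:ℝ) - (j'.1:ℝ))) + (2*ε + 2*γ))) := by
            exact mul_le_mul' le_rfl (two_rpow_mono
              (exponent_ineq hβ hm hm'0 hεdef hγdef r1 r2 r3 hcast))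
        _ = Kb * ((2:ℝ≥0∞)^(-(γ*((j:ℝ) - (((j'.1 - 2 : ℤ)):ℝ)))) *
            (2:ℝ≥0∞)^(-(γ*((js:ℝ) - (jt:ℝ))))) := by
            rw [show (2:ℝ≥0∞)^(-(γ*((j:ℝ) - (((j'.1 - 2 : ℤ)):ℝ))) + (-(γ*((js:ℝ) - (jt:ℝ)))) +
                (-(γ*((jt:ℝ) - (j'.1:ℝ))) + (2*ε + 2*γ)))
              = (2:ℝ≥0∞)^(-(γ*((j:ℝ) - (((j'.1 - 2 : ℤ)):ℝ)))) *
                (2:ℝ≥0∞)^(-(γ*((js:ℝ) - (jt:ℝ)))) *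
                ((2:ℝ≥0∞)^(-(γ*((jt:ℝ) - (j'.1:ℝ)))) * (2:ℝ≥0∞)^(2*ε+2*γ))
              from by simp only [two_rpow_add], hKb]
            ring
    set w := (2:ℝ≥0∞)^(2*((j'.1:ℝ) - (jt:ℝ))*m') * (2:ℝ≥0∞)^((j'.1:ℝ)*(β-1)) with hw
    have hwp : ∀ Z : ℝ≥0∞, w * Z^(1/p) = (w^p * Z)^(1/p) := by
      intro Z
      rw [ENNReal.mul_rpow_of_nonneg _ _ (by positivity), ← ENNReal.rpow_mul w p (1/p),
        mul_one_div_cancel hp0.ne', ENNReal.rpow_one]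
    calc w * wLp n p (F j'.1 jt)
        ≤ w * (∑' i, (c i * wLp n p (G i) / θ i)^p)^(1/p) := mul_le_mul' le_rfl K1
      _ = (∑' i, (w * (c i * wLp n p (G i) / θ i))^p)^(1/p) := by
          rw [hwp, ← ENNReal.tsum_mul_left]
          congr 1
          exact tsum_congr fun i => (ENNReal.mul_rpow_of_nonneg _ _ hp0.le).symm
      _ ≤ (∑' i, (Kb * ((2:ℝ≥0∞)^(-(γ*((i.1.1:ℝ) - (((j'.1 - 2 : ℤ)):ℝ)))) *
            (2:ℝ≥0∞)^(-(γ*((i.2.1:ℝ) - (jt:ℝ))))))^p)^(1/p) :=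
          ENNReal.rpow_le_rpow (ENNReal.tsum_le_tsum fun i =>
            ENNReal.rpow_le_rpow (K3 i) hp0.le) (by positivity)
      _ = (Kb^p * ∑' i : (Σ (j : {j : ℤ // j'.1 - 2 ≤ j}), {js : ℤ // jt ≤ js ∧ js ≤ j.1}),
            ((2:ℝ≥0∞)^(-((γ*p)*((i.1.1:ℝ) - (((j'.1 - 2 : ℤ)):ℝ)))) *
             (2:ℝ≥0∞)^(-((γ*p)*((i.2.1:ℝ) - (jt:ℝ))))))^(1/p) := by
          rw [← ENNReal.tsum_mul_left]
          congr 1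
          refine tsum_congr fun i => ?_
          have e1 : (-(γ*((i.1.1:ℝ) - (((j'.1 - 2 : ℤ)):ℝ))))*p
              = -((γ*p)*((i.1.1:ℝ) - (((j'.1 - 2 : ℤ)):ℝ))) := by ring
          have e2 : (-(γ*((i.2.1:ℝ) - (jt:ℝ))))*p = -((γ*p)*((i.2.1:ℝ) - (jt:ℝ))) := by ring
          rw [ENNReal.mul_rpow_of_nonneg _ _ hp0.le, ENNReal.mul_rpow_of_nonneg _ _ hp0.le,
            ENNReal.mul_rpow_of_nonneg ((2:ℝ≥0∞)^(-(γ * ((i.1.1:ℝ) - (((j'.1 - 2 : ℤ)):ℝ)))))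
              _ hp0.le, two_rpow_rpow, two_rpow_rpow, e1, two_rpow_rpow, e2]
      _ ≤ (Kb^p * (cγ * cγ))^(1/p) := by
          refine ENNReal.rpow_le_rpow (mul_le_mul' le_rfl ?_) (by positivity)
          calc ∑' i : (Σ (j : {j : ℤ // j'.1 - 2 ≤ j}), {js : ℤ // jt ≤ js ∧ js ≤ j.1}),
              ((2:ℝ≥0∞)^(-((γ*p)*((i.1.1:ℝ) - (((j'.1 - 2 : ℤ)):ℝ)))) *
               (2:ℝ≥0∞)^(-((γ*p)*((i.2.1:ℝ) - (jt:ℝ)))))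
              = ∑' (j : {j : ℤ // j'.1 - 2 ≤ j}), ∑' (js : {js : ℤ // jt ≤ js ∧ js ≤ j.1}),
                ((2:ℝ≥0∞)^(-((γ*p)*((j.1:ℝ) - (((j'.1 - 2 : ℤ)):ℝ)))) *
                 (2:ℝ≥0∞)^(-((γ*p)*((js.1:ℝ) - (jt:ℝ))))) :=
                ENNReal.tsum_sigma' _
            _ ≤ ∑' (j : {j : ℤ // j'.1 - 2 ≤ j}),
                ((2:ℝ≥0∞)^(-((γ*p)*((j.1:ℝ) - (((j'.1 - 2 : ℤ)):ℝ)))) * cγ) := by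
                refine ENNReal.tsum_le_tsum fun j => ?_
                rw [ENNReal.tsum_mul_left]
                refine mul_le_mul' le_rfl ?_
                refine le_trans (le_of_eq rfl) (le_trans
                  (ENNReal.tsum_comp_le_tsum_of_injective
                    (f := fun js : {js : ℤ // jt ≤ js ∧ js ≤ j.1} =>
                      (⟨js.1, js.2.1⟩ : {js : ℤ // jt ≤ js}))
                    (fun a b hab => by
                      apply Subtype.ext
                      have := congrArg Subtype.val hab
                      simpa using this)
                    (fun js => (2:ℝ≥0∞)^(-((γ*p)*((js.1:ℝ) - (jt:ℝ)))))) (le_of_eq ?_))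
                rw [geomGe jt (by positivity), ← hcγ]
            _ = cγ * cγ := by
                rw [ENNReal.tsum_mul_right, geomGe _ (by positivity), ← hcγ]
      _ = Kb * Gp := by
          rw [ENNReal.mul_rpow_of_nonneg _ _ (by positivity), ← ENNReal.rpow_mul Kb p (1/p),
            mul_one_div_cancel hp0.ne', ENNReal.rpow_one, hGp]
      _ = Kbig * S^(1/q) * (2:ℝ≥0∞)^(-(γ*((jt:ℝ) - (j'.1:ℝ)))) := by
          rw [hKb, hKbig]
          ring
  -- sum over j' and sup over jt
  have perjt : ∀ jt : ℤ, (∑' j' : {j' : ℤ // j' ≤ jt},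
      ((2:ℝ≥0∞)^(2*((j'.1:ℝ) - (jt:ℝ))*m') * (2:ℝ≥0∞)^((j'.1:ℝ)*(β-1))
        * wLp n p (F j'.1 jt)) ^ q) ≤ T * S := by
    intro jt
    calc ∑' j' : {j' : ℤ // j' ≤ jt},
        ((2:ℝ≥0∞)^(2*((j'.1:ℝ) - (jt:ℝ))*m') * (2:ℝ≥0∞)^((j'.1:ℝ)*(β-1))
          * wLp n p (F j'.1 jt)) ^ q
        ≤ ∑' j' : {j' : ℤ // j' ≤ jt},
          (Kbig * S^(1/q) * (2:ℝ≥0∞)^(-(γ*((jt:ℝ) - (j'.1:ℝ)))))^q :=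
          ENNReal.tsum_le_tsum fun j' => ENNReal.rpow_le_rpow (key jt j') hq0.le
      _ = ∑' j' : {j' : ℤ // j' ≤ jt},
          (Kbig^q * S) * (2:ℝ≥0∞)^(-((γ*q)*((jt:ℝ) - (j'.1:ℝ)))) := by
          refine tsum_congr fun j' => ?_
          rw [ENNReal.mul_rpow_of_nonneg _ _ hq0.le, ENNReal.mul_rpow_of_nonneg _ _ hq0.le,
            two_rpow_rpow, ← ENNReal.rpow_mul, one_div_mul_cancel hq0.ne', ENNReal.rpow_one]
          rw [mul_assoc, mul_assoc]
          congr 2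
          congr 1
          ring
      _ = (Kbig^q * S) * cq := by
          rw [ENNReal.tsum_mul_left, geomLe jt (by positivity)]
      _ = T * S := by rw [hT]; ring
  refine ⟨T.toNNReal ⊔ 1, lt_of_lt_of_le one_pos (le_sup_right), ?_⟩
  refine le_trans (iSup_le perjt) ?_
  refine mul_le_mul' ?_ le_rfl
  calc T = (T.toNNReal : ℝ≥0∞) := (ENNReal.coe_toNNReal hTt).symm
    _ ≤ ((T.toNNReal ⊔ 1 : NNReal) : ℝ≥0∞) := by
        exact_mod_cast le_sup_left
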